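/- (Kostant formula, combinatorial form.) Let P be a finite set. For each p ∈ P let ε_p ∈ {1, −1}, let μ_p ∈ ℤ, let m_p ≥ 1, and let α_{p,1},…,α_{p,m_p} be positive integers with μ_p ≡ ∑_{j} α_{p,j} (mod 2). For β ∈ ℤ let N̄_p(β) be the (finite) number of tuples k ∈ ℕ^{m_p} with 2β = μ_p − ∑_{j=1}^{m_p} (2k_j + 1)α_{p,j}. Suppose c : ℤ → ℤ is finitely supported and that for every real λ > 1 one has ∑_{β ∈ ℤ} c(β) λ^β = ∑_{p ∈ P} ε_p · λ^{(μ_p − ∑_j α_{p,j})/2} · ∏_{j=1}^{m_p} (1 − λ^{−α_{p,j}})^{−1}. Then for every β ∈ ℤ, c(β) = ∑_{p ∈ P} ε_p · N̄_p(β). -/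

import Mathlib

/-- The partition function `N̄_p(β)`: the number of tuples `k ∈ ℕ^{m_p}` with
`2β = μ_p − ∑_j (2k_j + 1) α_{p,j}`. -/
noncomputable def Nbar (m : ℕ) (α : Fin m → ℕ) (μ β : ℤ) : ℕ :=
  Nat.card {k : Fin m → ℕ | 2 * β = μ - ∑ j, (2 * (k j : ℤ) + 1) * (α j : ℤ)}

set_option maxHeartbeats 1000000


lemma summable_of_abs_mul_pow {a : ℕ → ℝ} {x : ℝ} (hx0 : 0 < x)
    (hs : Summable fun k => |a k| * x ^ k) : Summable fun k => a k * x ^ k := by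
  refine Summable.of_abs (hs.congr fun k => ?_)
  rw [abs_mul, abs_pow, abs_of_pos hx0]

set_option maxHeartbeats 1000000 in
lemma coeff_zero_base (a : ℕ → ℝ)
    (hs : ∀ x : ℝ, 0 < x → x < 1 → Summable fun k => |a k| * x ^ k)
    (h : ∀ x : ℝ, 0 < x → x < 1 → ∑' k, a k * x ^ k = 0) : a 0 = 0 := by
  have habs : ∀ x : ℝ, 0 < x → x < 1 → Summable fun k => |a (k + 1)| * x ^ (k + 1) :=
    fun x hx0 hx1 => (summable_nat_add_iff 1).mpr (hs x hx0 hx1)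
  have half0 : (0:ℝ) < 1/2 := by norm_num
  have half1 : (1/2:ℝ) < 1 := by norm_num
  have hCs : Summable fun k => |a (k + 1)| * (1/2 : ℝ) ^ k := by
    refine ((habs _ half0 half1).mul_right 2).congr fun k => ?_
    rw [pow_succ]; ring
  set C : ℝ := ∑' k, |a (k + 1)| * (1/2 : ℝ) ^ k with hC
  have hCnn : 0 ≤ C := tsum_nonneg fun k => by positivity
  have key : ∀ x : ℝ, 0 < x → x ≤ 1/2 → |a 0| ≤ C * x := by
    intro x hx0 hx12
    have hx1 : x < 1 := lt_of_le_of_lt hx12 half1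
    have hfull := summable_of_abs_mul_pow hx0 (hs x hx0 hx1)
    have hzero := h x hx0 hx1
    rw [Summable.tsum_eq_zero_add hfull] at hzero
    have ha0 : a 0 = -∑' k, a (k + 1) * x ^ (k + 1) := by
      simp only [pow_zero, mul_one] at hzero
      linarith
    have hshift := habs x hx0 hx1
    have h1 : |a 0| ≤ ∑' k, |a (k + 1)| * x ^ (k + 1) := by
      rw [ha0, abs_neg]
      have hn : Summable fun k => ‖a (k + 1) * x ^ (k + 1)‖ := by
        refine hshift.congr fun k => ?_
        rw [Real.norm_eq_abs, abs_mul, abs_pow, abs_of_pos hx0]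
      calc |∑' k, a (k + 1) * x ^ (k + 1)| ≤ ∑' k, ‖a (k + 1) * x ^ (k + 1)‖ := by
            simpa using norm_tsum_le_tsum_norm hn
        _ = ∑' k, |a (k + 1)| * x ^ (k + 1) := by
            refine tsum_congr fun k => ?_
            rw [Real.norm_eq_abs, abs_mul, abs_pow, abs_of_pos hx0]
    have h2 : ∑' k, |a (k + 1)| * x ^ (k + 1) ≤ ∑' k, (|a (k + 1)| * (1/2:ℝ) ^ k) * x := by
      refine Summable.tsum_le_tsum (fun k => ?_) hshift (hCs.mul_right x)
      rw [pow_succ, ← mul_assoc]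
      have hxk : x ^ k ≤ (1/2:ℝ) ^ k := pow_le_pow_left₀ hx0.le hx12 k
      exact mul_le_mul_of_nonneg_right
        (mul_le_mul_of_nonneg_left hxk (abs_nonneg _)) hx0.le
    rw [tsum_mul_right] at h2
    exact h1.trans h2
  have : |a 0| ≤ 0 := by
    refine le_of_forall_pos_le_add fun ε hε => ?_
    have hx0 : (0:ℝ) < min (1/2) (ε / (C + 1)) := by positivity
    have := key _ hx0 (min_le_left _ _)
    have h2 : C * min (1/2) (ε / (C + 1)) ≤ C * (ε / (C + 1)) :=
      mul_le_mul_of_nonneg_left (min_le_right _ _) hCnn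
    have h3 : C * (ε / (C + 1)) ≤ ε := by
      rw [mul_div_assoc']
      rw [div_le_iff₀ (by linarith)]
      nlinarith
    linarith
  have := le_antisymm this (abs_nonneg _)
  exact abs_eq_zero.mp this

lemma coeff_zero (a : ℕ → ℝ)
    (hs : ∀ x : ℝ, 0 < x → x < 1 → Summable fun k => |a k| * x ^ k)
    (h : ∀ x : ℝ, 0 < x → x < 1 → ∑' k, a k * x ^ k = 0) : ∀ n, a n = 0 := by
  intro n
  induction n generalizing a with
  | zero => exact coeff_zero_base a hs h
  | succ n ih =>
    have h0 : a 0 = 0 := coeff_zero_base a hs h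
    refine ih (fun k => a (k + 1)) (fun x hx0 hx1 => ?_) (fun x hx0 hx1 => ?_)
    · refine (((summable_nat_add_iff 1).mpr (hs x hx0 hx1)).mul_right x⁻¹).congr fun k => ?_
      rw [pow_succ]
      rw [mul_assoc, mul_assoc, mul_inv_cancel₀ hx0.ne', mul_one]
    · have hfull := summable_of_abs_mul_pow hx0 (hs x hx0 hx1)
      have hzero := h x hx0 hx1
      rw [Summable.tsum_eq_zero_add hfull, h0] at hzero
      have : ∑' k, a (k + 1) * x ^ (k + 1) = (∑' k, a (k + 1) * x ^ k) * x := by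
        rw [← tsum_mul_right]
        exact tsum_congr fun k => by rw [pow_succ]; ring
      rw [this] at hzero
      simp only [zero_mul, zero_add] at hzero
      exact (mul_eq_zero.mp hzero).resolve_right hx0.ne'



lemma hasSum_geom_pi (x : ℝ) (hx0 : 0 ≤ x) (hx1 : x < 1) :
    ∀ (m : ℕ) (α : Fin m → ℕ), (∀ j, 0 < α j) →
    HasSum (fun k : Fin m → ℕ => x ^ (∑ j, k j * α j)) (∏ j, (1 - x ^ (α j))⁻¹) := by
  intro m
  induction m with
  | zero =>
    intro α hα
    simpa using hasSum_single (f := fun k : Fin 0 → ℕ => x ^ (∑ j, k j * α j))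
      default (fun b hb => absurd (Subsingleton.elim b default) hb)
  | succ n ih =>
    intro α hα
    have h1 : HasSum (fun k : ℕ => (x ^ α 0) ^ k) (1 - x ^ α 0)⁻¹ :=
      hasSum_geometric_of_lt_one (pow_nonneg hx0 _)
        (pow_lt_one₀ hx0 hx1 (hα 0).ne')
    have h2 := ih (fun j => α j.succ) (fun j => hα _)
    have hprodsum := Summable.mul_of_nonneg h1.summable h2.summable
        (fun k => pow_nonneg (pow_nonneg hx0 _) _) (fun k => pow_nonneg hx0 _)
    have h3 := h1.mul h2 hprodsum
    refine (Equiv.hasSum_iff (Fin.consEquiv (fun _ : Fin (n + 1) => ℕ))).mp ?_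
    have hcomp : ((fun k : Fin (n + 1) → ℕ => x ^ (∑ j, k j * α j)) ∘
        (Fin.consEquiv (fun _ : Fin (n + 1) => ℕ))) =
        fun q : ℕ × (Fin n → ℕ) => (x ^ α 0) ^ q.1 * x ^ (∑ j, q.2 j * α j.succ) := by
      funext q
      simp only [Function.comp_apply, Fin.consEquiv_apply]
      rw [Fin.sum_univ_succ]
      simp only [Fin.cons_zero, Fin.cons_succ]
      rw [pow_add, mul_comm (q.1) (α 0), pow_mul]
    rw [hcomp, Fin.prod_univ_succ]
    exact h3

lemma fiber_finite (m : ℕ) (α : Fin m → ℕ) (hα : ∀ j, 0 < α j) (t n : ℕ) :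
    {k : Fin m → ℕ | t + ∑ j, k j * α j = n}.Finite := by
  refine Set.Finite.subset (Set.Finite.pi (fun j : Fin m => Set.finite_Iic n)) ?_
  intro k hk
  simp only [Set.mem_setOf_eq] at hk
  rw [Set.mem_pi]
  intro j _
  simp only [Set.mem_Iic]
  have h1 : k j ≤ k j * α j := Nat.le_mul_of_pos_right _ (hα j)
  have h2 : k j * α j ≤ ∑ i, k i * α i :=
    Finset.single_le_sum (f := fun i => k i * α i) (fun i _ => Nat.zero_le _)
      (Finset.mem_univ j)
  omega

lemma hasSum_card_mul_pow (m : ℕ) (α : Fin m → ℕ) (hα : ∀ j, 0 < α j) (t : ℕ)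
    (x : ℝ) (hx0 : 0 < x) (hx1 : x < 1) :
    HasSum (fun n : ℕ =>
        (Nat.card {k : Fin m → ℕ | t + ∑ j, k j * α j = n} : ℝ) * x ^ n)
      (x ^ t * ∏ j, (1 - x ^ (α j))⁻¹) := by
  have h := (hasSum_geom_pi x hx0.le hx1 m α hα).mul_left (x ^ t)
  have h2 : HasSum (fun k : Fin m → ℕ => x ^ (t + ∑ j, k j * α j))
      (x ^ t * ∏ j, (1 - x ^ (α j))⁻¹) := by
    have heq : (fun k : Fin m → ℕ => x ^ (t + ∑ j, k j * α j)) =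
        fun k : Fin m → ℕ => x ^ t * x ^ (∑ j, k j * α j) :=
      funext fun k => pow_add x t _
    rw [heq]; exact h
  have h3 := h2.tsum_fiberwise (fun k => t + ∑ j, k j * α j)
  have heq : (fun n : ℕ =>
      (Nat.card {k : Fin m → ℕ | t + ∑ j, k j * α j = n} : ℝ) * x ^ n) =
      fun n : ℕ => ∑' (b : ((fun k : Fin m → ℕ => t + ∑ j, k j * α j) ⁻¹' {n})),
        x ^ (t + ∑ j, (b : Fin m → ℕ) j * α j) := by
    funext n
    have hset : ((fun k : Fin m → ℕ => t + ∑ j, k j * α j) ⁻¹' {n}) =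
        {k : Fin m → ℕ | t + ∑ j, k j * α j = n} := by
      ext k; simp [Set.mem_preimage]
    have hfin : ((fun k : Fin m → ℕ => t + ∑ j, k j * α j) ⁻¹' {n}).Finite := by
      rw [hset]; exact fiber_finite m α hα t n
    haveI := hfin.fintype
    have h4 : ∑' (b : ((fun k : Fin m → ℕ => t + ∑ j, k j * α j) ⁻¹' {n})),
        x ^ (t + ∑ j, (b : Fin m → ℕ) j * α j) =
        ∑' (_ : ((fun k : Fin m → ℕ => t + ∑ j, k j * α j) ⁻¹' {n})), x ^ n := by
      refine tsum_congr fun b => ?_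
      have hb := b.2
      simp only [Set.mem_preimage, Set.mem_singleton_iff] at hb
      rw [hb]
    rw [h4, tsum_fintype, Finset.sum_const, ← hset, Nat.card_eq_fintype_card]
    simp [nsmul_eq_mul]
  rw [heq]
  exact h3

/-- **Kostant formula, combinatorial form.**  If the finitely supported multiplicity
function `c` has the character `∑_β c(β) λ^β` equal, for every real `λ > 1`, to the
fixed-point sum `∑_p ε_p λ^{(μ_p − ∑_j α_{p,j})/2} ∏_j (1 − λ^{−α_{p,j}})⁻¹`, then
`c(β) = ∑_p ε_p N̄_p(β)` for every weight `β`. -/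
theorem kostant_formula_combinatorial (P : Type) [Fintype P]
    (ε : P → ℤ) (hε : ∀ p, ε p = 1 ∨ ε p = -1)
    (μ : P → ℤ) (m : P → ℕ) (hm : ∀ p, 1 ≤ m p)
    (α : (p : P) → Fin (m p) → ℕ) (hα : ∀ p j, 0 < α p j)
    (hpar : ∀ p, μ p ≡ (∑ j, (α p j : ℤ)) [ZMOD 2])
    (c : ℤ → ℤ) (hc : {β : ℤ | c β ≠ 0}.Finite)
    (hchar : ∀ lam : ℝ, 1 < lam →
      ∑' β : ℤ, (c β : ℝ) * lam ^ β =
        ∑ p, (ε p : ℝ) * lam ^ ((μ p - ∑ j, (α p j : ℤ)) / 2) *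
          ∏ j, (1 - lam ^ (-(α p j : ℤ)))⁻¹)
    (β : ℤ) :
    c β = ∑ p, ε p * (Nbar (m p) (α p) (μ p) β : ℤ) := by
  classical
  set e : P → ℤ := fun p => (μ p - ∑ j, (α p j : ℤ)) / 2 with he
  have h2e : ∀ p, 2 * e p = μ p - ∑ j, (α p j : ℤ) := by
    intro p
    have hdvd : (2:ℤ) ∣ ((∑ j, (α p j : ℤ)) - μ p) := (hpar p).dvd
    simp only [he]
    omega
  set F : Finset ℤ := hc.toFinset with hF
  set G : Finset ℤ := insert β (F ∪ Finset.image e Finset.univ) with hG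
  have hβG : β ∈ G := Finset.mem_insert_self _ _
  set B : ℤ := G.max' ⟨β, hβG⟩ with hB
  have hβB : β ≤ B := Finset.le_max' G β hβG
  have hFB : ∀ γ ∈ F, γ ≤ B := fun γ hγ =>
    Finset.le_max' G γ (by simp [hG, hγ])
  have heB : ∀ p, e p ≤ B := fun p =>
    Finset.le_max' G (e p) (by
      simp only [hG, Finset.mem_insert, Finset.mem_union, Finset.mem_image]
      exact Or.inr (Or.inr ⟨p, Finset.mem_univ p, rfl⟩))
  set t : P → ℕ := fun p => (B - e p).toNat with ht
  have htB : ∀ p, (t p : ℤ) = B - e p := fun p =>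
    Int.toNat_of_nonneg (by linarith [heB p])
  -- key counting identity
  have hkey : ∀ (p : P) (n : ℕ), Nbar (m p) (α p) (μ p) (B - n) =
      Nat.card {k : Fin (m p) → ℕ | t p + ∑ j, k j * α p j = n} := by
    intro p n
    have hsets : {k : Fin (m p) → ℕ |
        2 * (B - n) = μ p - ∑ j, (2 * (k j : ℤ) + 1) * (α p j : ℤ)} =
        {k : Fin (m p) → ℕ | t p + ∑ j, k j * α p j = n} := by
      ext k
      simp only [Set.mem_setOf_eq]
      have hsum : ∑ j, (2 * (k j : ℤ) + 1) * (α p j : ℤ)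
          = 2 * (∑ j, (k j : ℤ) * (α p j : ℤ)) + ∑ j, (α p j : ℤ) := by
        rw [Finset.mul_sum, ← Finset.sum_add_distrib]
        exact Finset.sum_congr rfl fun j _ => by ring
      have hcast : ((∑ j, k j * α p j : ℕ) : ℤ) = ∑ j, (k j : ℤ) * (α p j : ℤ) := by
        push_cast; rfl
      rw [hsum]
      have h2e' := h2e p
      have htB' := htB p
      omega
    unfold Nbar
    rw [hsets]
  set s : Finset ℕ := F.image (fun γ => (B - γ).toNat) with hs
  have hcsupp : ∀ n : ℕ, n ∉ s → c (B - n) = 0 := by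
    intro n hn
    by_contra hne
    refine hn (Finset.mem_image.mpr ⟨B - n, ?_, by omega⟩)
    rw [hF, Set.Finite.mem_toFinset]
    exact hne
  have hNp : ∀ (x : ℝ), 0 < x → x < 1 → ∀ p : P,
      HasSum (fun n : ℕ => (Nbar (m p) (α p) (μ p) (B - n) : ℝ) * x ^ n)
        (x ^ (t p) * ∏ j, (1 - x ^ (α p j))⁻¹) := by
    intro x hx0 hx1 p
    have h0 := hasSum_card_mul_pow (m p) (α p) (hα p) (t p) x hx0 hx1
    have heq : (fun n : ℕ => (Nbar (m p) (α p) (μ p) (B - n) : ℝ) * x ^ n) =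
        fun n : ℕ =>
          (Nat.card {k : Fin (m p) → ℕ | t p + ∑ j, k j * α p j = n} : ℝ) * x ^ n := by
      funext n; rw [hkey p n]
    rw [heq]; exact h0
  have main : ∀ x : ℝ, 0 < x → x < 1 →
      HasSum (fun n : ℕ => ((c (B - n) : ℝ) -
        ∑ p, (ε p : ℝ) * (Nbar (m p) (α p) (μ p) (B - n) : ℝ)) * x ^ n) 0 := by
    intro x hx0 hx1
    have hxne : x ≠ 0 := hx0.ne'
    set lam : ℝ := x⁻¹ with hlamdef
    have hlam1 : 1 < lam := (one_lt_inv₀ hx0).mpr hx1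
    have hzpow : ∀ γ : ℤ, lam ^ γ = x ^ (-γ) := by
      intro γ; rw [hlamdef, inv_zpow, ← zpow_neg]
    have hcL : HasSum (fun n : ℕ => (c (B - n) : ℝ) * x ^ n)
        ((∑' γ : ℤ, (c γ : ℝ) * lam ^ γ) * x ^ B) := by
      have h1 : HasSum (fun n : ℕ => (c (B - n) : ℝ) * x ^ n)
          (∑ n ∈ s, (c (B - n) : ℝ) * x ^ n) :=
        hasSum_sum_of_ne_finset_zero (by
          intro n hn; rw [hcsupp n hn]; simp)
      have h2 : ∑' γ : ℤ, (c γ : ℝ) * lam ^ γ = ∑ γ ∈ F, (c γ : ℝ) * lam ^ γ :=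
        tsum_eq_sum (by
          intro γ hγ
          have hcγ : c γ = 0 := by
            by_contra hne
            exact hγ (by rw [hF, Set.Finite.mem_toFinset]; exact hne)
          rw [hcγ]; simp)
      have h3 : ∑ n ∈ s, (c (B - n) : ℝ) * x ^ n
          = ∑ γ ∈ F, (c γ : ℝ) * lam ^ γ * x ^ B := by
        rw [hs, Finset.sum_image (by
          intro γ1 hγ1 γ2 hγ2 hEq
          have := hFB γ1 hγ1; have := hFB γ2 hγ2
          simp only at hEq
          omega)]
        refine Finset.sum_congr rfl fun γ hγ => ?_
        have hγB := hFB γ hγ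
        have htn : ((B - γ).toNat : ℤ) = B - γ := Int.toNat_of_nonneg (by omega)
        have hxpow : x ^ ((B - γ).toNat) = x ^ (B - γ : ℤ) := by
          rw [← zpow_natCast, htn]
        have hcc : B - ((B - γ).toNat : ℤ) = γ := by omega
        rw [hxpow, hcc, hzpow, show B - γ = -γ + B by ring, zpow_add₀ hxne, mul_assoc]
      rw [h2, Finset.sum_mul, ← h3]
      exact h1
    have hP : HasSum (fun n : ℕ =>
        ∑ p, (ε p : ℝ) * ((Nbar (m p) (α p) (μ p) (B - n) : ℝ) * x ^ n))
        (∑ p, (ε p : ℝ) * (x ^ (t p) * ∏ j, (1 - x ^ (α p j))⁻¹)) :=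
      hasSum_sum fun p _ => (hNp x hx0 hx1 p).mul_left _
    have htot := hcL.sub hP
    have hval : (∑' γ : ℤ, (c γ : ℝ) * lam ^ γ) * x ^ B -
        ∑ p, (ε p : ℝ) * (x ^ (t p) * ∏ j, (1 - x ^ (α p j))⁻¹) = 0 := by
      rw [hchar lam hlam1, Finset.sum_mul, sub_eq_zero]
      refine Finset.sum_congr rfl fun p _ => ?_
      have hprod : ∏ j, (1 - lam ^ (-(α p j : ℤ)))⁻¹ = ∏ j, (1 - x ^ (α p j))⁻¹ :=
        Finset.prod_congr rfl fun j _ => by rw [hzpow, neg_neg, zpow_natCast]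
      have hpow : lam ^ ((μ p - ∑ j, (α p j : ℤ)) / 2) * x ^ B = x ^ (t p) := by
        have hee : (μ p - ∑ j, (α p j : ℤ)) / 2 = e p := rfl
        have htB' := htB p
        rw [hee, hzpow, ← zpow_add₀ hxne, show -e p + B = ((t p : ℕ) : ℤ) by omega,
          zpow_natCast]
      rw [hprod, ← hpow]
      ring
    rw [hval] at htot
    have hfun : (fun n : ℕ => (c (B - n) : ℝ) * x ^ n -
        ∑ p, (ε p : ℝ) * ((Nbar (m p) (α p) (μ p) (B - n) : ℝ) * x ^ n)) =
        fun n : ℕ => ((c (B - n) : ℝ) -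
          ∑ p, (ε p : ℝ) * (Nbar (m p) (α p) (μ p) (B - n) : ℝ)) * x ^ n := by
      funext n
      rw [sub_mul, Finset.sum_mul]
      congr 1
      exact Finset.sum_congr rfl fun p _ => by ring
    rw [← hfun]
    exact htot
  have habs : ∀ x : ℝ, 0 < x → x < 1 → Summable (fun n : ℕ =>
      |(c (B - n) : ℝ) - ∑ p, (ε p : ℝ) * (Nbar (m p) (α p) (μ p) (B - n) : ℝ)| * x ^ n) := by
    intro x hx0 hx1
    have hc1 : Summable (fun n : ℕ => |(c (B - n) : ℝ)| * x ^ n) :=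
      summable_of_ne_finset_zero (s := s) (by
        intro n hn; rw [hcsupp n hn]; simp)
    have hmaj : Summable (fun n : ℕ => |(c (B - n) : ℝ)| * x ^ n +
        ∑ p, (Nbar (m p) (α p) (μ p) (B - n) : ℝ) * x ^ n) :=
      hc1.add (summable_sum fun p _ => (hNp x hx0 hx1 p).summable)
    refine Summable.of_nonneg_of_le (fun n => by positivity) (fun n => ?_) hmaj
    have h1 : |(c (B - n) : ℝ) - ∑ p, (ε p : ℝ) * (Nbar (m p) (α p) (μ p) (B - n) : ℝ)|
        ≤ |(c (B - n) : ℝ)| + ∑ p, (Nbar (m p) (α p) (μ p) (B - n) : ℝ) := by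
      refine (abs_sub _ _).trans ?_
      gcongr
      refine (Finset.abs_sum_le_sum_abs _ _).trans ?_
      refine Finset.sum_le_sum fun p _ => ?_
      rcases hε p with h | h <;> rw [h] <;> simp [abs_of_nonneg]
    calc |(c (B - n) : ℝ) - ∑ p, (ε p : ℝ) * (Nbar (m p) (α p) (μ p) (B - n) : ℝ)| * x ^ n
        ≤ (|(c (B - n) : ℝ)| + ∑ p, (Nbar (m p) (α p) (μ p) (B - n) : ℝ)) * x ^ n :=
          mul_le_mul_of_nonneg_right h1 (pow_nonneg hx0.le n)
      _ = |(c (B - n) : ℝ)| * x ^ n +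
          ∑ p, (Nbar (m p) (α p) (μ p) (B - n) : ℝ) * x ^ n := by
          rw [add_mul, Finset.sum_mul]
  have hzero := coeff_zero _ habs (fun x hx0 hx1 => (main x hx0 hx1).tsum_eq)
  have hfin := hzero ((B - β).toNat)
  have hBβ : B - ((B - β).toNat : ℤ) = β := by omega
  rw [hBβ] at hfin
  have hreal : (c β : ℝ) = ∑ p, (ε p : ℝ) * (Nbar (m p) (α p) (μ p) β : ℝ) := by
    linarith [hfin]
  exact_mod_cast hreal
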